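/- For every λ ∈ [0,1], the weighted shift T on l² with weights a_j = sqrt((j+1)/j) is a 2-isometry, but its generalized λ-mean transform M_λ(T), the weighted shift with weights m_{λ,j} = (a_j^λ a_{j+1}^{1-λ} + a_j^{1-λ} a_{j+1}^λ)/2, is not a 2-isometry. -/

import Mathlib

noncomputable section

/-- The Hilbert space `ℓ²(ℕ, ℂ)`. -/
abbrev Ell2 := lp (fun _ : ℕ => ℂ) 2

/-- The canonical orthonormal basis of `ℓ²` (indexed from `0`; the paper's index `j ≥ 1`
corresponds to our index `j - 1`). -/
noncomputable def e (j : ℕ) : Ell2 := lp.single 2 j 1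

/-- `T` is an `m`-isometry: `∑_{k=0}^m (-1)^k C(m,k) ‖T^k x‖² = 0` for all `x`. -/
def IsMIsometry (T : Ell2 →L[ℂ] Ell2) (m : ℕ) : Prop :=
  ∀ x : Ell2,
    ∑ k ∈ Finset.range (m + 1), (-1 : ℝ) ^ k * (m.choose k : ℝ) * ‖(T ^ k) x‖ ^ 2 = 0

lemma e_orthonormal : Orthonormal ℂ e := by
  rw [orthonormal_iff_ite]
  intro i j
  rw [e, e, lp.inner_single_left, lp.single_apply]
  split_ifs with h <;> simp [h]

lemma norm_e (j : ℕ) : ‖e j‖ = 1 := by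
  rw [e]
  have := lp.norm_single (E := fun _ : ℕ => ℂ) (p := 2) (by norm_num) j (1:ℂ)
  simpa using this

lemma norm_sq_sum {v : ℕ → Ell2} (hv : Orthonormal ℂ v) (f : ℕ → ℂ) (s : Finset ℕ) :
    ‖∑ i ∈ s, f i • v i‖ ^ 2 = ∑ i ∈ s, ‖f i‖ ^ 2 := by
  have h := hv.inner_sum f f s
  have h2 := inner_self_eq_norm_sq (𝕜 := ℂ) (∑ i ∈ s, f i • v i)
  rw [h] at h2
  rw [← h2]
  simp [RCLike.conj_mul, ← Complex.ofReal_pow]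

lemma dense_span_e : Dense ((Submodule.span ℂ (Set.range e) : Submodule ℂ Ell2) : Set Ell2) := by
  intro x
  refine mem_closure_of_tendsto (lp.hasSum_single ENNReal.ofNat_ne_top x) (.of_forall fun s => ?_)
  refine Submodule.sum_mem _ fun i _ => ?_
  have : lp.single (E := fun _ : ℕ => ℂ) 2 i (x i) = x i • e i := by
    rw [e, ← lp.single_smul]
    norm_num
  rw [this]
  exact Submodule.smul_mem _ _ (Submodule.subset_span ⟨i, rfl⟩)

lemma shift_two_isometry_aux (w : ℕ → ℝ)
    (hw : ∀ j : ℕ, w j = Real.sqrt (((j : ℝ) + 2) / ((j : ℝ) + 1)))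
    (T : Ell2 →L[ℂ] Ell2) (hT : ∀ j, T (e j) = ((w j : ℝ) : ℂ) • e (j + 1)) :
    ∀ x : Ell2, ‖x‖ ^ 2 - 2 * ‖T x‖ ^ 2 + ‖T (T x)‖ ^ 2 = 0 := by
  have hwnn : ∀ j, 0 ≤ w j := fun j => (hw j) ▸ Real.sqrt_nonneg _
  have hwsq : ∀ j : ℕ, (w j) ^ 2 = ((j : ℝ) + 2) / ((j : ℝ) + 1) := by
    intro j
    rw [hw j]
    exact Real.sq_sqrt (by positivity)
  have hC : IsClosed {y : Ell2 | ‖y‖ ^ 2 - 2 * ‖T y‖ ^ 2 + ‖T (T y)‖ ^ 2 = 0} :=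
    isClosed_eq (by fun_prop) continuous_const
  have hspan : ((Submodule.span ℂ (Set.range e) : Submodule ℂ Ell2) : Set Ell2) ⊆
      {y : Ell2 | ‖y‖ ^ 2 - 2 * ‖T y‖ ^ 2 + ‖T (T y)‖ ^ 2 = 0} := by
    intro y hy
    rw [SetLike.mem_coe, Finsupp.mem_span_range_iff_exists_finsupp] at hy
    obtain ⟨c, rfl⟩ := hy
    have hrep : (c.sum fun i a => a • e i) = ∑ i ∈ c.support, c i • e i := rfl
    simp only [Set.mem_setOf_eq, hrep]
    set s := c.support
    have hT1 : T (∑ i ∈ s, c i • e i) = ∑ i ∈ s, (c i * (w i : ℂ)) • e (i + 1) := by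
      rw [map_sum]
      refine Finset.sum_congr rfl fun i _ => ?_
      rw [map_smul, hT, smul_smul]
    have hT2 : T (∑ i ∈ s, (c i * (w i : ℂ)) • e (i + 1)) =
        ∑ i ∈ s, (c i * (w i : ℂ) * (w (i + 1) : ℂ)) • e (i + 2) := by
      rw [map_sum]
      refine Finset.sum_congr rfl fun i _ => ?_
      rw [map_smul, hT, smul_smul]
    rw [hT1, hT2]
    have hn1 : ‖∑ i ∈ s, (c i * (w i : ℂ)) • e (i + 1)‖ ^ 2
        = ∑ i ∈ s, ‖c i * (w i : ℂ)‖ ^ 2 := by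
      simpa [Function.comp] using
        norm_sq_sum (e_orthonormal.comp (· + 1) (add_left_injective 1))
          (fun i => c i * (w i : ℂ)) s
    have hn2 : ‖∑ i ∈ s, (c i * (w i : ℂ) * (w (i + 1) : ℂ)) • e (i + 2)‖ ^ 2
        = ∑ i ∈ s, ‖c i * (w i : ℂ) * (w (i + 1) : ℂ)‖ ^ 2 := by
      simpa [Function.comp] using
        norm_sq_sum (e_orthonormal.comp (· + 2) (add_left_injective 2))
          (fun i => c i * (w i : ℂ) * (w (i + 1) : ℂ)) s
    rw [norm_sq_sum e_orthonormal, hn1, hn2]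
    have key : ∀ i : ℕ, ‖c i‖ ^ 2 - 2 * ‖c i * (w i : ℂ)‖ ^ 2
        + ‖c i * (w i : ℂ) * (w (i + 1) : ℂ)‖ ^ 2 = 0 := by
      intro i
      have h1 : ((i : ℝ) + 1) ≠ 0 := by positivity
      have h2 : ((i : ℝ) + 2) ≠ 0 := by positivity
      have e1 : (w i) ^ 2 = ((i : ℝ) + 2) / ((i : ℝ) + 1) := hwsq i
      have e2 : (w (i + 1)) ^ 2 = ((i : ℝ) + 3) / ((i : ℝ) + 2) := by
        rw [hwsq (i + 1)]; push_cast; ring_nf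
      simp only [norm_mul, Complex.norm_real, Real.norm_eq_abs, abs_of_nonneg (hwnn _)]
      have : (1 : ℝ) - 2 * (w i) ^ 2 + ((w i) * (w (i + 1))) ^ 2 = 0 := by
        rw [mul_pow, e1, e2]
        field_simp
        ring
      linear_combination (‖c i‖ ^ 2) * this
    have hz : ∑ i ∈ s, (‖c i‖ ^ 2 - 2 * ‖c i * (w i : ℂ)‖ ^ 2
        + ‖c i * (w i : ℂ) * (w (i + 1) : ℂ)‖ ^ 2) = 0 :=
      Finset.sum_eq_zero fun i _ => key i
    simp only [Finset.sum_add_distrib, Finset.sum_sub_distrib, ← Finset.mul_sum] at hz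
    simpa using hz
  intro x
  exact hC.closure_subset_iff.2 hspan (dense_span_e x)

theorem lambda_mean_transform_of_two_isometry_not_two_isometry
    (l : ℝ) (hl : l ∈ Set.Icc (0 : ℝ) 1)
    (w : ℕ → ℝ) (hw : ∀ j : ℕ, w j = Real.sqrt (((j : ℝ) + 2) / ((j : ℝ) + 1)))
    (T M : Ell2 →L[ℂ] Ell2)
    (hT : ∀ j, T (e j) = ((w j : ℝ) : ℂ) • e (j + 1))
    (hM : ∀ j, M (e j) =
      (((w j ^ l * w (j + 1) ^ (1 - l) + w j ^ (1 - l) * w (j + 1) ^ l) / 2 : ℝ) : ℂ)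
        • e (j + 1)) :
    IsMIsometry T 2 ∧ ¬ IsMIsometry M 2 := by
  obtain ⟨hl0, hl1⟩ := hl
  constructor
  · intro x
    have h := shift_two_isometry_aux w hw T hT x
    simp only [Finset.sum_range_succ, Finset.sum_range_zero, pow_succ, pow_zero,
      ContinuousLinearMap.mul_apply, ContinuousLinearMap.one_apply, Nat.choose]
    norm_num
    linarith
  · intro hM2
    have hw0 : w 0 = Real.sqrt 2 := by rw [hw]; norm_num
    have hw1 : w 1 = Real.sqrt (3 / 2) := by rw [hw]; norm_num
    have hw2 : w 2 = Real.sqrt (4 / 3) := by rw [hw]; norm_num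
    have ha : (0 : ℝ) < w 0 := by rw [hw0]; positivity
    have hb : (0 : ℝ) < w 1 := by rw [hw1]; positivity
    have hc : (0 : ℝ) < w 2 := by rw [hw2]; positivity
    set m0 : ℝ := (w 0 ^ l * w 1 ^ (1 - l) + w 0 ^ (1 - l) * w 1 ^ l) / 2 with hm0def
    set m1 : ℝ := (w 1 ^ l * w 2 ^ (1 - l) + w 1 ^ (1 - l) * w 2 ^ l) / 2 with hm1def
    have hm0nn : 0 ≤ m0 := by
      have := Real.rpow_nonneg ha.le l
      have := Real.rpow_nonneg ha.le (1 - l)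
      have := Real.rpow_nonneg hb.le l
      have := Real.rpow_nonneg hb.le (1 - l)
      rw [hm0def]; positivity
    have hm1nn : 0 ≤ m1 := by
      have := Real.rpow_nonneg hb.le l
      have := Real.rpow_nonneg hb.le (1 - l)
      have := Real.rpow_nonneg hc.le l
      have := Real.rpow_nonneg hc.le (1 - l)
      rw [hm1def]; positivity
    have hMe0 : M (e 0) = ((m0 : ℝ) : ℂ) • e 1 := hM 0
    have hMe1 : M (e 1) = ((m1 : ℝ) : ℂ) • e 2 := hM 1
    have h0 := hM2 (e 0)
    have hsum : (1 : ℝ) - 2 * m0 ^ 2 + (m0 * m1) ^ 2 = 0 := by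
      rw [show (2 : ℕ) + 1 = 3 from rfl] at h0
      simp only [Finset.sum_range_succ, Finset.sum_range_zero, pow_succ, pow_zero,
        ContinuousLinearMap.mul_apply, ContinuousLinearMap.one_apply, Nat.choose] at h0
      rw [hMe0, map_smul, hMe1, smul_smul] at h0
      simp only [norm_smul, norm_e, norm_mul, Complex.norm_real, Real.norm_eq_abs,
        abs_of_nonneg hm0nn, abs_of_nonneg hm1nn] at h0
      norm_num at h0
      linarith
    -- now derive a contradiction
    have hab : w 0 * w 1 = Real.sqrt 3 := by
      rw [hw0, hw1, ← Real.sqrt_mul (by norm_num)]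
      norm_num
    have hbc : w 1 * w 2 = Real.sqrt 2 := by
      rw [hw1, hw2, ← Real.sqrt_mul (by norm_num)]
      norm_num
    have hb2 : w 1 ^ 2 = 3 / 2 := by rw [hw1]; exact Real.sq_sqrt (by norm_num)
    have hc2 : w 2 ^ 2 = 4 / 3 := by rw [hw2]; exact Real.sq_sqrt (by norm_num)
    have hm0sq : Real.sqrt 3 ≤ m0 ^ 2 := by
      set u := w 0 ^ l * w 1 ^ (1 - l) with hu
      set v := w 0 ^ (1 - l) * w 1 ^ l with hv
      have huv : u * v = Real.sqrt 3 := by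
        rw [hu, hv, mul_mul_mul_comm, ← Real.rpow_add ha, ← Real.rpow_add hb,
          show l + (1 - l) = 1 by ring, show 1 - l + l = 1 by ring,
          Real.rpow_one, Real.rpow_one, hab]
      have hsq := sq_nonneg (u - v)
      rw [hm0def]
      nlinarith only [huv, hsq]
    have hm1le : m1 ≤ (w 1 + w 2) / 2 := by
      have hA := Real.geom_mean_le_arith_mean2_weighted (w₁ := l) (w₂ := 1 - l)
        (p₁ := w 1) (p₂ := w 2) hl0 (by linarith) hb.le hc.le (by ring)
      have hB := Real.geom_mean_le_arith_mean2_weighted (w₁ := 1 - l) (w₂ := l)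
        (p₁ := w 1) (p₂ := w 2) (by linarith) hl0 hb.le hc.le (by ring)
      rw [hm1def]
      linarith
    have hm1sq : m1 ^ 2 ≤ 17 / 24 + Real.sqrt 2 / 2 := by
      nlinarith only [hm1le, hm1nn, hb2, hc2, hbc, hb.le, hc.le]
    have h2u : Real.sqrt 2 < 1.41422 := by
      rw [show (1.41422 : ℝ) = Real.sqrt (1.41422 ^ 2) from
        (Real.sqrt_sq (by norm_num)).symm]
      exact Real.sqrt_lt_sqrt (by norm_num) (by norm_num)
    have h3l : (1.7320 : ℝ) < Real.sqrt 3 := by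
      rw [show (1.7320 : ℝ) = Real.sqrt (1.7320 ^ 2) from
        (Real.sqrt_sq (by norm_num)).symm]
      exact Real.sqrt_lt_sqrt (by norm_num) (by norm_num)
    have h3u : Real.sqrt 3 < 1.73206 := by
      rw [show (1.73206 : ℝ) = Real.sqrt (1.73206 ^ 2) from
        (Real.sqrt_sq (by norm_num)).symm]
      exact Real.sqrt_lt_sqrt (by norm_num) (by norm_num)
    have h6u : Real.sqrt 3 * Real.sqrt 2 < 2.4496 := by
      nlinarith only [Real.sqrt_nonneg (3:ℝ), Real.sqrt_nonneg (2:ℝ), h3u, h2u]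
    have hxpos : (0 : ℝ) < 31 / 24 - Real.sqrt 2 / 2 := by linarith
    have hx : 31 / 24 - Real.sqrt 2 / 2 ≤ 2 - m1 ^ 2 := by linarith
    have hkey : Real.sqrt 3 * (31 / 24 - Real.sqrt 2 / 2) ≤ m0 ^ 2 * (2 - m1 ^ 2) :=
      mul_le_mul hm0sq hx hxpos.le (sq_nonneg m0)
    have hgt1 : (1 : ℝ) < Real.sqrt 3 * (31 / 24 - Real.sqrt 2 / 2) := by
      nlinarith only [h6u, h3l]
    nlinarith only [hkey, hgt1, hsum, sq_nonneg (m0 * m1)]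

end
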